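/- arXiv:1209.1054 — 3 statements merged into one kernel-verified Lean document; each statement's English description precedes it below -/
import Mathlib

section
/- A real symmetric 3×3 matrix M has three real, positive and pairwise distinct eigenvalues if and only if: (1a) det M > 0, (1b) tr M > 0, (1c) tr(M²) < (tr M)²; (2) (tr M)² < 3 tr(M²); and (3) |tr M · (5(tr M)² − 9 tr(M²)) − 54 det M| < √2 · (3 tr(M²) − (tr M)²)^{3/2}. -/
private lemma charpoly3 (M : Matrix (Fin 3) (Fin 3) ℝ) (x : ℝ) :
    (x • (1 : Matrix (Fin 3) (Fin 3) ℝ) - M).det =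
      x^3 - M.trace * x^2 + ((M.trace^2 - (M*M).trace)/2) * x - M.det := by
  simp [Matrix.det_fin_three, Matrix.trace, Matrix.mul_apply, Fin.sum_univ_three,
    Matrix.smul_apply, Matrix.one_apply, Matrix.sub_apply, Matrix.diag]
  ring

private lemma spec3 (M : Matrix (Fin 3) (Fin 3) ℝ) (hM : M.IsSymm) :
    ∃ a b c : ℝ, ∀ x : ℝ, (x • (1 : Matrix (Fin 3) (Fin 3) ℝ) - M).det =
      (x - a) * (x - b) * (x - c) := by
  have hH : M.IsHermitian := by
    rwa [Matrix.IsHermitian, Matrix.conjTranspose_eq_transpose_of_trivial]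
  set D : Matrix (Fin 3) (Fin 3) ℝ :=
    Matrix.diagonal (RCLike.ofReal ∘ hH.eigenvalues) with hD
  set V : Matrix (Fin 3) (Fin 3) ℝ :=
    (Matrix.IsHermitian.eigenvectorUnitary hH : Matrix (Fin 3) (Fin 3) ℝ) with hV
  have hst : V * star V = 1 :=
    (Matrix.mem_unitaryGroup_iff).mp (Matrix.IsHermitian.eigenvectorUnitary hH).2
  have hM' : M = V * D * star V := hH.spectral_theorem
  refine ⟨hH.eigenvalues 0, hH.eigenvalues 1, hH.eigenvalues 2, fun x => ?_⟩
  have key : x • (1 : Matrix (Fin 3) (Fin 3) ℝ) - M = V * (x • 1 - D) * star V := by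
    rw [hM', Matrix.mul_sub, Matrix.sub_mul]
    congr 1
    rw [Matrix.mul_smul, Matrix.mul_one, Matrix.smul_mul, hst]
  have hdet : V.det * (star V).det = 1 := by
    rw [← Matrix.det_mul, hst, Matrix.det_one]
  have hdiag : x • (1 : Matrix (Fin 3) (Fin 3) ℝ) - D =
      Matrix.diagonal (fun i => x - hH.eigenvalues i) := by
    ext i j
    rcases eq_or_ne i j with rfl | h
    · simp [hD]
    · simp [hD, Matrix.one_apply_ne h, Matrix.diagonal_apply_ne _ h]
  rw [key, Matrix.det_mul, Matrix.det_mul, mul_comm, ← mul_assoc, mul_comm ((star V).det),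
    hdet, one_mul, hdiag, Matrix.det_diagonal, Fin.prod_univ_three]

private lemma extract3 (t q d a b c : ℝ)
    (h : ∀ x : ℝ, x^3 - t*x^2 + ((t^2-q)/2)*x - d = (x-a)*(x-b)*(x-c)) :
    t = a+b+c ∧ q = a^2+b^2+c^2 ∧ d = a*b*c := by
  have h0 := h 0
  have h1 := h 1
  have hm1 := h (-1)
  ring_nf at h0 h1 hm1
  have hd : d = a*b*c := by linarith
  have hE : (t^2 - q)/2 = a*b + a*c + b*c := by linarith
  have ht : t = a+b+c := by linarith
  refine ⟨ht, ?_, hd⟩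
  linear_combination (t + (a+b+c)) * ht - 2 * hE

private lemma sort3 (a b c : ℝ) (ha : 0 < a) (hb : 0 < b) (hc : 0 < c)
    (hab : a ≠ b) (hbc : b ≠ c) (hac : a ≠ c) :
    ∃ x y z : ℝ, 0 < x ∧ x < y ∧ y < z ∧
      ∀ w : ℝ, (w-a)*(w-b)*(w-c) = (w-x)*(w-y)*(w-z) := by
  rcases lt_or_gt_of_ne hab with h1 | h1
  · rcases lt_or_gt_of_ne hbc with h2 | h2
    · exact ⟨a, b, c, ha, h1, h2, fun w => by ring⟩
    · rcases lt_or_gt_of_ne hac with h3 | h3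
      · exact ⟨a, c, b, ha, h3, h2, fun w => by ring⟩
      · exact ⟨c, a, b, hc, h3, h1, fun w => by ring⟩
  · rcases lt_or_gt_of_ne hbc with h2 | h2
    · rcases lt_or_gt_of_ne hac with h3 | h3
      · exact ⟨b, a, c, hb, h1, h3, fun w => by ring⟩
      · exact ⟨b, c, a, hb, h2, h3, fun w => by ring⟩
    · exact ⟨c, b, a, hc, h2, h1, fun w => by ring⟩

private lemma root_pos3 (t q d r : ℝ) (ht : 0 < t) (hq : q < t^2) (hd : 0 < d)
    (hr : r^3 - t*r^2 + ((t^2-q)/2)*r - d = 0) : 0 < r := by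
  by_contra hneg
  push_neg at hneg
  have hE : 0 < (t^2 - q)/2 := by linarith
  nlinarith [mul_nonneg ht.le (sq_nonneg r), mul_nonneg hE.le (neg_nonneg.2 hneg),
    mul_nonneg (neg_nonneg.2 hneg) (sq_nonneg r)]

private lemma rsq_eq (X : ℝ) (hX : 0 ≤ X) :
    (Real.sqrt 2 * X ^ ((3:ℝ)/2))^2 = 2 * X^3 := by
  rw [mul_pow, Real.sq_sqrt (by norm_num : (0:ℝ) ≤ 2),
    ← Real.rpow_natCast (X ^ ((3:ℝ)/2)) 2, ← Real.rpow_mul hX]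
  norm_num

theorem stmt5 (M : Matrix (Fin 3) (Fin 3) ℝ) (hM : M.IsSymm) :
    (∃ l₁ l₂ l₃ : ℝ, 0 < l₁ ∧ l₁ < l₂ ∧ l₂ < l₃ ∧
      ∀ x : ℝ, (x • (1 : Matrix (Fin 3) (Fin 3) ℝ) - M).det =
        (x - l₁) * (x - l₂) * (x - l₃)) ↔
    ((M.det > 0 ∧ M.trace > 0 ∧ (M * M).trace < M.trace ^ 2) ∧
     M.trace ^ 2 < 3 * (M * M).trace ∧
     |M.trace * (5 * M.trace ^ 2 - 9 * (M * M).trace) - 54 * M.det| <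
       Real.sqrt 2 * (3 * (M * M).trace - M.trace ^ 2) ^ ((3 : ℝ) / 2)) := by
  constructor
  · rintro ⟨a, b, c, ha, hab, hbc, hfac⟩
    have hb : 0 < b := ha.trans hab
    have hc : 0 < c := hb.trans hbc
    obtain ⟨ht, hq, hd⟩ := extract3 M.trace ((M*M).trace) M.det a b c
      (fun x => ((charpoly3 M x).symm.trans (hfac x)))
    rw [ht, hq, hd]
    have hX : 0 < 3*(a^2+b^2+c^2) - (a+b+c)^2 := by nlinarith [sq_nonneg (a-c), sq_nonneg (b-c)]
    refine ⟨⟨by positivity, by positivity, ?_⟩, by linarith, ?_⟩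
    · nlinarith [mul_pos ha hb, mul_pos hb hc, mul_pos ha hc]
    · set X : ℝ := 3*(a^2+b^2+c^2) - (a+b+c)^2 with hXdef
      set S : ℝ := (a+b+c) * (5*(a+b+c)^2 - 9*(a^2+b^2+c^2)) - 54*(a*b*c) with hSdef
      have hkey : 2*X^3 - S^2 = 108*((a-b)^2*((b-c)^2*(a-c)^2)) := by
        rw [hXdef, hSdef]; ring
      have hprod : 0 < (a-b)^2*((b-c)^2*(a-c)^2) :=
        mul_pos (pow_two_pos_of_ne_zero (sub_ne_zero.2 hab.ne))
          (mul_pos (pow_two_pos_of_ne_zero (sub_ne_zero.2 hbc.ne))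
            (pow_two_pos_of_ne_zero (sub_ne_zero.2 (hab.trans hbc).ne)))
      have hS2 : S^2 < 2*X^3 := by nlinarith
      have hRpos : 0 < Real.sqrt 2 * X ^ ((3:ℝ)/2) := by positivity
      have habs : |S|^2 < (Real.sqrt 2 * X ^ ((3:ℝ)/2))^2 := by
        rw [sq_abs, rsq_eq X hX.le]; exact hS2
      exact lt_of_pow_lt_pow_left₀ 2 hRpos.le habs
  · rintro ⟨⟨hd, ht, hq⟩, h2, h3⟩
    obtain ⟨a, b, c, hfac⟩ := spec3 M hM
    have hpoly := fun x => ((charpoly3 M x).symm.trans (hfac x))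
    obtain ⟨ht', hq', hd'⟩ := extract3 M.trace ((M*M).trace) M.det a b c hpoly
    -- positivity of roots
    have hra : 0 < a := root_pos3 _ _ _ a ht hq hd (by rw [hpoly a]; ring)
    have hrb : 0 < b := root_pos3 _ _ _ b ht hq hd (by rw [hpoly b]; ring)
    have hrc : 0 < c := root_pos3 _ _ _ c ht hq hd (by rw [hpoly c]; ring)
    rw [ht', hq'] at h2
    rw [ht', hq', hd'] at h3
    have hX : 0 < 3*(a^2+b^2+c^2) - (a+b+c)^2 := by linarith
    set X : ℝ := 3*(a^2+b^2+c^2) - (a+b+c)^2 with hXdef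
    set S : ℝ := (a+b+c) * (5*(a+b+c)^2 - 9*(a^2+b^2+c^2)) - 54*(a*b*c) with hSdef
    have h3' : |S| < Real.sqrt 2 * X ^ ((3:ℝ)/2) := by
      convert h3 using 3 <;> ring
    have hS2 : S^2 < 2*X^3 := by
      have := pow_lt_pow_left₀ h3' (abs_nonneg S) two_ne_zero
      rwa [sq_abs, rsq_eq X hX.le] at this
    have hkey : 2*X^3 - S^2 = 108*((a-b)^2*((b-c)^2*(a-c)^2)) := by
      rw [hXdef, hSdef]; ring
    have hprod : 0 < (a-b)^2*((b-c)^2*(a-c)^2) := by nlinarith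
    have hab : a ≠ b := by
      intro hEq; rw [hEq] at hprod; simp at hprod
    have hbc : b ≠ c := by
      intro hEq; rw [hEq] at hprod; simp at hprod
    have hac : a ≠ c := by
      intro hEq; rw [hEq] at hprod; simp at hprod
    obtain ⟨x, y, z, hx, hxy, hyz, hperm⟩ := sort3 a b c hra hrb hrc hab hbc hac
    exact ⟨x, y, z, hx, hxy, hyz, fun w => (hfac w).trans (hperm w)⟩
end

section
/- The real symmetric matrix M = ![![E, 0, 0], ![0, C, B], ![0, B, 0]] (texture with zeros at A, D, F positions) cannot have three positive eigenvalues when B ≠ 0: the conditions tr M > 0, det M > 0, and tr(M²) < (tr M)² are mutually inconsistent. -/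
theorem stmt8 (B C E : ℝ) (hB : B ≠ 0)
    (M : Matrix (Fin 3) (Fin 3) ℝ)
    (hM : M = !![E, 0, 0; 0, C, B; 0, B, 0]) :
    ¬ (M.trace > 0 ∧ M.det > 0 ∧ (M * M).trace < M.trace ^ 2) := by
  rintro ⟨h1, h2, h3⟩
  subst hM
  simp [Matrix.trace_fin_three, Matrix.det_fin_three, Matrix.mul_fin_three] at h1 h2 h3
  nlinarith [sq_nonneg B, sq_nonneg (C + E), sq_nonneg (C - E), mul_pos h1 h1]
end

section
/- The diagonal matrix diag(a₁, a₂, a₃) with a₁, a₂, a₃ positive and pairwise distinct (obtained as texture M(B,D,F), i.e., all off-diagonal entries zero) satisfies all three conditions: det M > 0, tr M > 0, tr(M²) < (tr M)², (tr M)² < 3 tr(M²), and |tr M(5(tr M)² − 9 tr M²) − 54 det M| < √2(3 tr M² − (tr M)²)^{3/2}. -/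
theorem stmt13 (a₁ a₂ a₃ : ℝ) (h₁ : 0 < a₁) (h₂ : a₁ < a₂) (h₃ : a₂ < a₃)
    (M : Matrix (Fin 3) (Fin 3) ℝ)
    (hM : M = Matrix.diagonal ![a₁, a₂, a₃]) :
    M.det > 0 ∧ M.trace > 0 ∧ (M * M).trace < M.trace ^ 2 ∧
    M.trace ^ 2 < 3 * (M * M).trace ∧
    |M.trace * (5 * M.trace ^ 2 - 9 * (M * M).trace) - 54 * M.det| <
      Real.sqrt 2 * (3 * (M * M).trace - M.trace ^ 2) ^ ((3 : ℝ) / 2) := by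
  have hdet : M.det = a₁ * a₂ * a₃ := by
    subst hM
    rw [Matrix.det_diagonal]
    simp [Fin.prod_univ_three]
  have htr : M.trace = a₁ + a₂ + a₃ := by
    subst hM
    rw [Matrix.trace_diagonal]
    simp [Fin.sum_univ_three]
  have htr2 : (M * M).trace = a₁ ^ 2 + a₂ ^ 2 + a₃ ^ 2 := by
    subst hM
    rw [Matrix.diagonal_mul_diagonal, Matrix.trace_diagonal]
    simp [Fin.sum_univ_three]
    ring
  rw [hdet, htr, htr2]
  have h12 : (0:ℝ) < a₂ - a₁ := by linarith
  have h23 : (0:ℝ) < a₃ - a₂ := by linarith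
  have h13 : (0:ℝ) < a₃ - a₁ := by linarith
  refine ⟨by nlinarith [mul_pos (mul_pos h₁ (h₁.trans h₂)) ((h₁.trans h₂).trans h₃)], by linarith, by nlinarith [sq_nonneg (a₁ - a₂), sq_nonneg (a₂ - a₃), sq_nonneg (a₁ - a₃)], by nlinarith [mul_pos h12 h23, mul_pos (mul_pos h12 h23) h13], ?_⟩
  set t : ℝ := 3 * (a₁ ^ 2 + a₂ ^ 2 + a₃ ^ 2) - (a₁ + a₂ + a₃) ^ 2 with ht
  have htpos : 0 < t := by nlinarith [mul_pos h12 h23, mul_pos (mul_pos h12 h23) h13]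
  have hrhs : Real.sqrt 2 * t ^ ((3:ℝ)/2) = Real.sqrt (2 * t ^ 3) := by
    rw [show ((3:ℝ)/2) = (3:ℝ) * (1/2) by norm_num, Real.rpow_mul htpos.le,
      show t ^ (3:ℝ) = t ^ (3:ℕ) by rw [← Real.rpow_natCast]; norm_num,
      ← Real.sqrt_eq_rpow, Real.sqrt_mul (by norm_num)]
  rw [hrhs]
  rw [Real.lt_sqrt (abs_nonneg _), sq_abs, ht]
  nlinarith [mul_pos (mul_pos h12 h23) h13, sq_nonneg ((a₂ - a₁) * (a₃ - a₂) * (a₃ - a₁))]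
end
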